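/- Define m_n as the minimum of Σᵢ λᵢ² over partitions λ of n with nonnegative rank. Then for all n ≥ 28, m_n ≤ (2^{−2/3} + 2^{1/3}) n^{4/3}. -/

import Mathlib

/-- The minimal sum of squares of parts over partitions of n with nonnegative rank. -/
noncomputable def minSumSq (n : ℕ) : ℕ :=
  sInf {s | ∃ P : n.Partition, P.parts.card ≤ P.parts.sup ∧
    (P.parts.map (fun x => x ^ 2)).sum = s}

set_option maxHeartbeats 1000000 in
/-- For `n ≥ 28`, `minSumSq n ≤ (2^(−2/3) + 2^(1/3)) n^(4/3)`. -/
theorem stmt_14 (n : ℕ) (hn : 28 ≤ n) :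
    (minSumSq n : ℝ) ≤
      ((2 : ℝ) ^ (-(2 : ℝ) / 3) + (2 : ℝ) ^ ((1 : ℝ) / 3)) * (n : ℝ) ^ ((4 : ℝ) / 3) := by
  have hN0 : (0:ℝ) < n := by positivity
  set N : ℝ := (n : ℝ) with hNdef
  set c : ℝ := (2:ℝ) ^ (-(1:ℝ)/3) * N ^ ((2:ℝ)/3) with hcdef
  have hc0 : 0 < c := by positivity
  -- N^(1/3) ≥ 3
  have hN13 : (3:ℝ) ≤ N ^ ((1:ℝ)/3) := by
    have h27' : (27:ℕ) ≤ n := by omega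
    have h27 : (27:ℝ) ≤ N := by rw [hNdef]; exact_mod_cast h27'
    calc (3:ℝ) = ((3:ℝ)^(3:ℕ)) ^ ((1:ℝ)/3) := by
          rw [← Real.rpow_natCast (3:ℝ) 3, ← Real.rpow_mul (by norm_num)]
          norm_num
      _ ≤ N ^ ((1:ℝ)/3) := by
          apply Real.rpow_le_rpow (by norm_num) (by norm_num; linarith) (by norm_num)
  -- c ≤ N/3
  have hcN3 : c ≤ N / 3 := by
    have h1 : (2:ℝ) ^ (-(1:ℝ)/3) ≤ 1 := by
      apply Real.rpow_le_one_of_one_le_of_nonpos (by norm_num) (by norm_num)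
    have h2 : N ^ ((2:ℝ)/3) * 3 ≤ N ^ ((2:ℝ)/3) * N ^ ((1:ℝ)/3) := by
      apply mul_le_mul_of_nonneg_left hN13 (by positivity)
    have h3 : N ^ ((2:ℝ)/3) * N ^ ((1:ℝ)/3) = N := by
      rw [← Real.rpow_add hN0]; norm_num
    have h4 : N ^ ((2:ℝ)/3) ≤ N / 3 := by linarith
    calc c ≤ 1 * N ^ ((2:ℝ)/3) :=
        mul_le_mul_of_nonneg_right h1 (by positivity)
      _ ≤ N / 3 := by linarith
  -- N^2 = 2 * c^3
  have hN2 : N ^ 2 = 2 * c ^ 3 := by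
    have : c ^ 3 = ((2:ℝ) ^ (-(1:ℝ)/3)) ^ (3:ℕ) * (N ^ ((2:ℝ)/3)) ^ (3:ℕ) := by
      rw [hcdef]; ring
    rw [this, ← Real.rpow_natCast ((2:ℝ) ^ (-(1:ℝ)/3)) 3,
      ← Real.rpow_natCast (N ^ ((2:ℝ)/3)) 3,
      ← Real.rpow_mul (by norm_num : (0:ℝ) ≤ 2), ← Real.rpow_mul hN0.le]
    norm_num
    ring
  -- the target constant equals 3 c^2
  have htarget : ((2 : ℝ) ^ (-(2 : ℝ) / 3) + (2 : ℝ) ^ ((1 : ℝ) / 3)) * N ^ ((4 : ℝ) / 3)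
      = 3 * c ^ 2 := by
    have h1 : c ^ 2 = ((2:ℝ) ^ (-(1:ℝ)/3)) ^ (2:ℕ) * (N ^ ((2:ℝ)/3)) ^ (2:ℕ) := by
      rw [hcdef]; ring
    have h2 : ((2:ℝ) ^ (-(1:ℝ)/3)) ^ (2:ℕ) = (2:ℝ) ^ (-(2:ℝ)/3) := by
      rw [← Real.rpow_natCast ((2:ℝ) ^ (-(1:ℝ)/3)) 2,
        ← Real.rpow_mul (by norm_num : (0:ℝ) ≤ 2)]
      norm_num
    have h3 : (N ^ ((2:ℝ)/3)) ^ (2:ℕ) = N ^ ((4:ℝ)/3) := by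
      rw [← Real.rpow_natCast (N ^ ((2:ℝ)/3)) 2, ← Real.rpow_mul hN0.le]
      norm_num
    have h4 : (2:ℝ) ^ ((1:ℝ)/3) = 2 * (2:ℝ) ^ (-(2:ℝ)/3) := by
      rw [show ((1:ℝ)/3) = 1 + (-(2:ℝ)/3) by norm_num,
        Real.rpow_add (by norm_num : (0:ℝ) < 2), Real.rpow_one]
    rw [h1, h2, h3, h4]; ring
  -- choose k
  set k : ℕ := ⌈c⌉₊ with hkdef
  have hck : c ≤ (k:ℝ) := Nat.le_ceil c
  have hkc : (k:ℝ) ≤ c + 1 := (Nat.ceil_lt_add_one hc0.le).le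
  have hk1 : 1 ≤ k := by
    rw [hkdef, Nat.one_le_ceil_iff]; exact hc0
  have hK0 : (0:ℝ) < (k:ℝ) := lt_of_lt_of_le hc0 hck
  have hNreal : (28:ℝ) ≤ N := by
    rw [hNdef]
    have : ((28:ℕ):ℝ) ≤ (n:ℝ) := Nat.cast_le.mpr hn
    simpa using this
  -- 2k+1 ≤ n
  have h2k1 : 2 * k + 1 ≤ n := by
    have : (2 * k + 1 : ℝ) ≤ N := by
      have := hcN3
      nlinarith
    exact_mod_cast (by push_cast; linarith : ((2*k+1 : ℕ) : ℝ) ≤ (n:ℝ))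
  have hk1n : k + 1 ≤ n := by omega
  set M : ℕ := n - (k + 1) with hMdef
  have hMk : k ≤ M := by omega
  set b : ℕ := M / k with hbdef
  set r : ℕ := M % k with hrdef
  have hb1 : 1 ≤ b := (Nat.one_le_div_iff hk1).mpr hMk
  have hrk : r < k := Nat.mod_lt _ hk1
  have hdm : k * b + r = M := Nat.div_add_mod M k
  -- the partition
  set parts : Multiset ℕ :=
    Multiset.replicate r (b+1) + Multiset.replicate (k-r) b + {k+1} with hparts
  have hsum : parts.sum = n := by
    rw [hparts]
    simp only [Multiset.sum_add, Multiset.sum_replicate, Multiset.sum_singleton, smul_eq_mul]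
    zify [hrk.le, hk1n]
    push_cast [Nat.cast_sub (le_of_lt hrk)] at *
    have hdm' : (k:ℤ) * b + r = (n:ℤ) - (k+1) := by
      have : (M:ℤ) = (n:ℤ) - (k+1) := by rw [hMdef]; push_cast [Nat.cast_sub hk1n]; ring
      rw [← this]; exact_mod_cast hdm
    nlinarith [hdm']
  let P : n.Partition :=
    { parts := parts
      parts_pos := by
        intro i hi
        rw [hparts] at hi
        simp only [Multiset.mem_add, Multiset.mem_replicate, Multiset.mem_singleton] at hi
        rcases hi with (⟨_, h⟩ | ⟨_, h⟩) | h <;> omega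
      parts_sum := hsum }
  have hcard : P.parts.card ≤ P.parts.sup := by
    have hc1 : P.parts.card = k + 1 := by
      show parts.card = k + 1
      rw [hparts]
      simp [Multiset.card_replicate]
      omega
    have hmem : (k+1) ∈ P.parts := by
      show (k+1) ∈ parts
      rw [hparts]; simp
    rw [hc1]
    exact Multiset.le_sup hmem
  set S : ℕ := r * (b+1)^2 + (k-r) * b^2 + (k+1)^2 with hSdef
  have hS : (P.parts.map (fun x => x ^ 2)).sum = S := by
    show (parts.map (fun x => x ^ 2)).sum = S
    rw [hparts]
    simp [Multiset.map_replicate, Multiset.sum_replicate, hSdef]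
  have hmin : minSumSq n ≤ S := Nat.sInf_le ⟨P, hcard, hS⟩
  -- real bound on S
  have hD : (k:ℝ) * b + r = N - k - 1 := by
    have hM' : (M:ℝ) = N - k - 1 := by
      rw [hMdef]; push_cast [Nat.cast_sub hk1n]; ring
    rw [← hM']; exact_mod_cast hdm
  have hSreal : (S:ℝ) = r * ((b:ℝ)+1)^2 + ((k:ℝ)-r) * (b:ℝ)^2 + ((k:ℝ)+1)^2 := by
    rw [hSdef]; push_cast [Nat.cast_sub hrk.le]; ring
  clear hS hcard
  clear P
  clear hsum
  clear_value S r b M k c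
  have hR0 : (0:ℝ) ≤ (r:ℝ) := by positivity
  have hB1 : (1:ℝ) ≤ (b:ℝ) := by exact_mod_cast hb1
  have hRK : (r:ℝ) ≤ (k:ℝ) - 1 := by
    have : (r:ℝ) + 1 ≤ (k:ℝ) := by exact_mod_cast hrk
    linarith
  -- key: S * k ≤ (N-k-1)^2 + k^2/4 + (k+1)^2 * k
  have hkey : (S:ℝ) * k ≤ (N - k - 1)^2 + (k:ℝ)^2/4 + ((k:ℝ)+1)^2 * k := by
    have hB2 : ((k:ℝ) * b + r)^2 = (N - k - 1)^2 := by rw [hD]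
    rw [hSreal, ← hB2]
    linarith [sq_nonneg (2*(r:ℝ) - k)]
  -- cube inequality
  have hcube : 2 * c^3 + (k:ℝ)^3 ≤ 3 * c^2 * k + 3 * k := by
    have e : (k:ℝ)^3 + 2*c^3 - 3*c^2*k = ((k:ℝ)-c)^2 * ((k:ℝ)+2*c) := by ring
    have h1 : ((k:ℝ)-c)^2 ≤ 1 := by nlinarith
    have h2 : ((k:ℝ)-c)^2 * ((k:ℝ)+2*c) ≤ 1 * ((k:ℝ)+2*c) :=
      mul_le_mul_of_nonneg_right h1 (by linarith)
    linarith
  -- final: (N-k-1)^2 + k^2/4 + (k+1)^2*k ≤ 3*c^2*k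
  have hfin : (N - k - 1)^2 + (k:ℝ)^2/4 + ((k:ℝ)+1)^2 * k ≤ 3 * c^2 * k := by
    have hkN : (k:ℝ) ≤ N/3 + 1 := by linarith
    linarith [hcube, hN2, mul_nonneg (by linarith : (0:ℝ) ≤ N/3 + 1 - k) hK0.le,
      mul_nonneg (by linarith : (0:ℝ) ≤ N - 28) hK0.le]
  have hS3c : (S:ℝ) ≤ 3 * c^2 := by
    have := le_trans hkey hfin
    have h := (mul_le_mul_iff_of_pos_right hK0).mp this
    exact h
  calc (minSumSq n : ℝ) ≤ (S:ℝ) := by exact_mod_cast hmin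
    _ ≤ 3 * c^2 := hS3c
    _ = ((2 : ℝ) ^ (-(2 : ℝ) / 3) + (2 : ℝ) ^ ((1 : ℝ) / 3)) * N ^ ((4 : ℝ) / 3) :=
        htarget.symm
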